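/- For all integers n and k, the generalized q-binomial coefficient satisfies the reflection formula qbinom(n,k) = (-1)^k · sgn(k) · q^{k(2n-k+1)/2} · qbinom(k-n-1, k), where sgn(k) = 1 if k ≥ 0 and -1 if k < 0. -/
import Mathlib


open LaurentPolynomial in
/-- The ordinary Gaussian binomial coefficient as a (Laurent) polynomial in `q = T 1`,
defined by the `q`-Pascal rule; it is `0` when the lower entry exceeds the upper one. -/
noncomputable def gauss : ℕ → ℕ → LaurentPolynomial ℤ
  | _, 0 => 1
  | 0, _ + 1 => 0
  | a + 1, b + 1 => gauss a b + T ((b : ℤ) + 1) * gauss a (b + 1)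

open LaurentPolynomial in
/-- The generalized `q`-binomial coefficient, a Laurent polynomial in `q = T 1`,
extended to arbitrary integer entries. -/
noncomputable def qbinom (n k : ℤ) : LaurentPolynomial ℤ :=
  if 0 ≤ k ∧ k ≤ n then gauss n.toNat k.toNat
  else if n < 0 ∧ 0 ≤ k then
    (-1) ^ k.toNat * T (k * (2 * n - k + 1) / 2) * gauss (k - n - 1).toNat k.toNat
  else if k ≤ n ∧ n < 0 then
    (-1) ^ (n - k).toNat * T ((n * (n + 1) - k * (k + 1)) / 2) *
      gauss (-k - 1).toNat (-n - 1).toNat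
  else 0

open LaurentPolynomial

lemma gauss_zero (a : ℕ) : gauss a 0 = 1 := by cases a <;> simp [gauss]

lemma gauss_succ (a b : ℕ) :
    gauss (a + 1) (b + 1) = gauss a b + T ((b : ℤ) + 1) * gauss a (b + 1) := rfl

lemma T_mul_T {x y z : ℤ} (h : x + y = z) :
    (T x : LaurentPolynomial ℤ) * T y = T z := by rw [← T_add, h]

lemma gauss_eq_zero : ∀ {a b : ℕ}, a < b → gauss a b = 0 := by
  intro a
  induction a with
  | zero => intro b h; cases b with | zero => omega | succ b => simp [gauss]
  | succ a ih =>
    intro b h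
    cases b with
    | zero => omega
    | succ b => rw [gauss_succ, ih (by omega), ih (by omega)]; ring

lemma gauss_self : ∀ a : ℕ, gauss a a = 1 := by
  intro a
  induction a with
  | zero => simp [gauss]
  | succ a ih => rw [gauss_succ, ih, gauss_eq_zero (by omega)]; ring

lemma gauss_pascal2 : ∀ (a b : ℕ),
    gauss (a + 1) (b + 1) = T ((a : ℤ) - b) * gauss a b + gauss a (b + 1) := by
  intro a
  induction a with
  | zero =>
    intro b
    cases b with
    | zero => simp [gauss_succ, gauss_zero, gauss_eq_zero (by omega : 0 < 1)]
    | succ b =>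
      rw [gauss_succ, gauss_eq_zero (by omega : 0 < b + 1),
        gauss_eq_zero (by omega : 0 < b + 2)]
      ring
  | succ a ih =>
    intro b
    cases b with
    | zero =>
      have h0 := ih 0
      have hT : (T 1 : LaurentPolynomial ℤ) * T ((a : ℤ)) = T ((a : ℤ) + 1) :=
        T_mul_T (by ring)
      conv_lhs => rw [gauss_succ, h0]
      conv_rhs => rw [gauss_succ a 0]
      simp only [gauss_zero]
      push_cast
      rw [show ((a : ℤ) - 0) = (a : ℤ) by ring, show ((a : ℤ) + 1 - 0) = (a : ℤ) + 1 by ring]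
      linear_combination hT
    | succ b =>
      have h1 := ih b
      have h2 := ih (b + 1)
      have hT1 : (T ((b : ℤ) + 1 + 1) : LaurentPolynomial ℤ) * T ((a : ℤ) - ((b : ℤ) + 1)) =
          T ((a : ℤ) + 1) := T_mul_T (by ring)
      have hT2 : (T ((a : ℤ) - b) : LaurentPolynomial ℤ) * T ((b : ℤ) + 1) =
          T ((a : ℤ) + 1) := T_mul_T (by ring)
      push_cast at h1 h2 ⊢
      conv_lhs => rw [gauss_succ, h1, h2]
      conv_rhs => rw [gauss_succ a b, gauss_succ a (b + 1)]
      push_cast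
      rw [show ((a : ℤ) + 1 - ((b : ℤ) + 1)) = (a : ℤ) - b by ring]
      linear_combination gauss a (b + 1) * hT1 - gauss a (b + 1) * hT2

lemma gauss_symm : ∀ (a b c : ℕ), b + c = a → gauss a b = gauss a c := by
  intro a
  induction a with
  | zero =>
    intro b c h
    obtain ⟨rfl, rfl⟩ : b = 0 ∧ c = 0 := by omega
    rfl
  | succ a ih =>
    intro b c h
    cases b with
    | zero =>
      obtain rfl : c = a + 1 := by omega
      rw [gauss_zero, gauss_self]
    | succ b =>
      cases c with
      | zero =>
        obtain rfl : b = a := by omega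
        rw [gauss_zero, gauss_self]
      | succ c =>
        conv_lhs => rw [gauss_succ]
        rw [gauss_pascal2 a c, ih b (c + 1) (by omega), ih (b + 1) c (by omega),
          show ((a : ℤ) - c) = (b : ℤ) + 1 by omega]
        ring

lemma two_dvd_refl_exp (n k : ℤ) : 2 ∣ k * (2 * n - k + 1) := by
  obtain ⟨t, ht⟩ := Int.even_mul_succ_self (k - 1)
  exact ⟨n * k - t, by linear_combination -ht⟩

lemma two_dvd_tri (n k : ℤ) : 2 ∣ n * (n + 1) - k * (k + 1) := by
  obtain ⟨t, ht⟩ := Int.even_mul_succ_self n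
  obtain ⟨s, hs⟩ := Int.even_mul_succ_self k
  exact ⟨t - s, by linear_combination ht - hs⟩

lemma ediv_add_ediv {A B C : ℤ} (hA : 2 ∣ A) (hB : 2 ∣ B) (h : A + B = C) :
    A / 2 + B / 2 = C / 2 := by
  obtain ⟨a, rfl⟩ := hA
  obtain ⟨b, rfl⟩ := hB
  subst h
  rw [Int.mul_ediv_cancel_left _ two_ne_zero, Int.mul_ediv_cancel_left _ two_ne_zero,
    ← mul_add, Int.mul_ediv_cancel_left _ two_ne_zero]

lemma neg_one_pow_parity {x y : ℕ} (h : Even (x + y)) :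
    ((-1 : LaurentPolynomial ℤ)) ^ x = (-1) ^ y := by
  rw [Nat.even_add] at h
  rcases Nat.even_or_odd x with hx | hx
  · rw [hx.neg_one_pow, Even.neg_one_pow (h.mp hx)]
  · have hy : Odd y := Nat.odd_iff.mpr (by
      rcases Nat.even_or_odd y with hy | hy
      · exact absurd (h.mpr hy) (Nat.not_even_iff_odd.mpr hx)
      · exact Nat.odd_iff.mp hy)
    rw [hx.neg_one_pow, hy.neg_one_pow]

open LaurentPolynomial in
theorem qbinom_reflect (n k : ℤ) :
    qbinom n k =
      (((-1) ^ k.natAbs * (if 0 ≤ k then 1 else -1) : ℤ) : LaurentPolynomial ℤ) *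
        T (k * (2 * n - k + 1) / 2) * qbinom (k - n - 1) k := by
  by_cases hk : 0 ≤ k
  · by_cases hkn : k ≤ n
    · -- Case A : 0 ≤ k ≤ n
      rw [qbinom, qbinom, if_pos ⟨hk, hkn⟩,
        if_neg (show ¬(0 ≤ k ∧ k ≤ k - n - 1) by omega),
        if_pos (show k - n - 1 < 0 ∧ 0 ≤ k by omega), if_pos hk,
        show k - (k - n - 1) - 1 = n by ring]
      have he : k * (2 * n - k + 1) / 2 + k * (2 * (k - n - 1) - k + 1) / 2 = 0 := by
        have := ediv_add_ediv (two_dvd_refl_exp n k) (two_dvd_refl_exp (k - n - 1) k)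
          (show k * (2 * n - k + 1) + k * (2 * (k - n - 1) - k + 1) = 0 by ring)
        simpa using this
      have hT : (T (k * (2 * n - k + 1) / 2) : LaurentPolynomial ℤ) *
          T (k * (2 * (k - n - 1) - k + 1) / 2) = 1 := by
        rw [T_mul_T he, T_zero]
      have hab : k.natAbs = k.toNat := by omega
      have hs : ((-1 : LaurentPolynomial ℤ)) ^ k.natAbs * (-1) ^ k.toNat = 1 := by
        rw [hab, ← pow_add]
        exact Even.neg_one_pow ⟨k.toNat, rfl⟩
      push_cast
      linear_combination (-(T (k * (2 * n - k + 1) / 2) * T (k * (2 * (k - n - 1) - k + 1) / 2)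
        * gauss n.toNat k.toNat)) * hs - gauss n.toNat k.toNat * hT
    · by_cases hn : n < 0
      · -- Case B : n < 0 ≤ k
        rw [qbinom, qbinom, if_neg (show ¬(0 ≤ k ∧ k ≤ n) by omega), if_pos ⟨hn, hk⟩,
          if_pos (show 0 ≤ k ∧ k ≤ k - n - 1 by omega), if_pos hk]
        have hab : k.natAbs = k.toNat := by omega
        push_cast [hab]
        ring
      · -- Case D : 0 ≤ n < k, both sides zero
        rw [qbinom, qbinom, if_neg (show ¬(0 ≤ k ∧ k ≤ n) by omega),
          if_neg (show ¬(n < 0 ∧ 0 ≤ k) by omega),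
          if_neg (show ¬(k ≤ n ∧ n < 0) by omega),
          if_neg (show ¬(0 ≤ k ∧ k ≤ k - n - 1) by omega),
          if_neg (show ¬(k - n - 1 < 0 ∧ 0 ≤ k) by omega),
          if_neg (show ¬(k ≤ k - n - 1 ∧ k - n - 1 < 0) by omega)]
        ring
  · by_cases hC : k ≤ n ∧ n < 0
    · -- Case C : k ≤ n < 0
      rw [qbinom, qbinom, if_neg (show ¬(0 ≤ k ∧ k ≤ n) by omega),
        if_neg (show ¬(n < 0 ∧ 0 ≤ k) by omega), if_pos hC,
        if_neg (show ¬(0 ≤ k ∧ k ≤ k - n - 1) by omega),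
        if_neg (show ¬(k - n - 1 < 0 ∧ 0 ≤ k) by omega),
        if_pos (show k ≤ k - n - 1 ∧ k - n - 1 < 0 by omega), if_neg hk]
      have hg : gauss (-k - 1).toNat (-(k - n - 1) - 1).toNat
          = gauss (-k - 1).toNat (-n - 1).toNat :=
        gauss_symm _ _ _ (by omega)
      rw [hg]
      have he : k * (2 * n - k + 1) / 2 +
          ((k - n - 1) * ((k - n - 1) + 1) - k * (k + 1)) / 2
          = (n * (n + 1) - k * (k + 1)) / 2 :=
        ediv_add_ediv (two_dvd_refl_exp n k) (two_dvd_tri (k - n - 1) k) (by ring)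
      have hT : (T (k * (2 * n - k + 1) / 2) : LaurentPolynomial ℤ) *
          T (((k - n - 1) * ((k - n - 1) + 1) - k * (k + 1)) / 2)
          = T ((n * (n + 1) - k * (k + 1)) / 2) := T_mul_T he
      have hs : ((-1 : LaurentPolynomial ℤ)) ^ k.natAbs * (-1) *
          (-1) ^ (k - n - 1 - k).toNat = (-1) ^ (n - k).toNat := by
        rw [show ((-1 : LaurentPolynomial ℤ)) ^ k.natAbs * (-1) = (-1) ^ (k.natAbs + 1) by
          rw [pow_succ], ← pow_add]
        exact neg_one_pow_parity (by rw [Nat.even_iff]; omega)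
      push_cast
      linear_combination (-(T ((n * (n + 1) - k * (k + 1)) / 2) *
          gauss (-k - 1).toNat (-n - 1).toNat)) * hs -
        ((-1 : LaurentPolynomial ℤ) ^ k.natAbs * (-1) * (-1) ^ (k - n - 1 - k).toNat *
          gauss (-k - 1).toNat (-n - 1).toNat) * hT
    · -- Case E : both sides zero
      rw [qbinom, qbinom, if_neg (show ¬(0 ≤ k ∧ k ≤ n) by omega),
        if_neg (show ¬(n < 0 ∧ 0 ≤ k) by omega), if_neg hC,
        if_neg (show ¬(0 ≤ k ∧ k ≤ k - n - 1) by omega),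
        if_neg (show ¬(k - n - 1 < 0 ∧ 0 ≤ k) by omega),
        if_neg (show ¬(k ≤ k - n - 1 ∧ k - n - 1 < 0) by omega)]
      ring
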